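/- Near-identity of the Duffy transform at (1,0) in a weighted sense (case θ = 1): Let V̂ = (1,0), T̂ = {0 < η < ξ < 1}, and v ∈ H¹(T̂). Then ∫₀¹ ∫_η¹ d_{V̂}(ξ,η)^{−2} (v(η(1−ξ)+ξ, η) − v(ξ,η))² dξ dη ≤ C ∫₀¹∫_η¹ |∂₁v(ξ,η)|² dξ dη, using d_{V̂}(ξ,η) ≥ 1−ξ on T̂ and Hardy's inequality. -/

import Mathlib

open MeasureTheory Set
set_option maxHeartbeats 1000000
open scoped ENNReal

/-- The reference triangle `T̂ = {(ξ,η) : 0 < η < ξ < 1}`. -/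
def refTriangle : Set (ℝ × ℝ) := {p | 0 < p.2 ∧ p.2 < p.1 ∧ p.1 < 1}

lemma isOpen_refTriangle : IsOpen refTriangle := by
  have h1 : IsOpen {p : ℝ × ℝ | 0 < p.2} := isOpen_lt continuous_const continuous_snd
  have h2 : IsOpen {p : ℝ × ℝ | p.2 < p.1} := isOpen_lt continuous_snd continuous_fst
  have h3 : IsOpen {p : ℝ × ℝ | p.1 < 1} := isOpen_lt continuous_fst continuous_const
  have : refTriangle = {p : ℝ × ℝ | 0 < p.2} ∩ ({p : ℝ × ℝ | p.2 < p.1} ∩ {p : ℝ × ℝ | p.1 < 1}) := by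
    ext p; simp [refTriangle, and_assoc]
  rw [this]
  exact h1.inter (h2.inter h3)

/-- Tonelli-type slicing of a lintegral over the reference triangle. -/
lemma triangle_lintegral (h : ℝ × ℝ → ℝ≥0∞) (hm : Measurable h) :
    ∫⁻ p in refTriangle, h p = ∫⁻ η in Ioo (0:ℝ) 1, ∫⁻ ξ in Ioo η 1, h (ξ, η) := by
  rw [← lintegral_indicator isOpen_refTriangle.measurableSet]
  rw [MeasureTheory.Measure.volume_eq_prod,
    lintegral_prod_symm' _ (hm.indicator isOpen_refTriangle.measurableSet)]
  rw [← lintegral_indicator (measurableSet_Ioo : MeasurableSet (Ioo (0:ℝ) 1))]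
  congr 1
  funext η
  by_cases hη : η ∈ Ioo (0:ℝ) 1
  · rw [indicator_of_mem hη, ← lintegral_indicator measurableSet_Ioo]
    congr 1
    funext ξ
    by_cases hξ : ξ ∈ Ioo η 1
    · rw [indicator_of_mem hξ, indicator_of_mem]
      exact ⟨hη.1, hξ.1, hξ.2⟩
    · rw [indicator_of_notMem hξ, indicator_of_notMem]
      intro hmem
      exact hξ ⟨hmem.2.1, hmem.2.2⟩
  · rw [indicator_of_notMem hη]
    have hz : ∀ ξ : ℝ, refTriangle.indicator h (ξ, η) = 0 := by
      intro ξ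
      apply indicator_of_notMem
      intro hmem
      exact hη ⟨hmem.1, lt_trans hmem.2.1 hmem.2.2⟩
    simp only [hz, lintegral_const, zero_mul]

/-- Measurability of a parametric tail integral. -/
lemma measurable_tail {α : Type*} [MeasurableSpace α] (ψ : α → ℝ → ℝ≥0∞) (c : α → ℝ)
    (hψ : Measurable (Function.uncurry ψ)) (hc : Measurable c) :
    Measurable fun a => ∫⁻ s in Ioo (c a) 1, ψ a s := by
  have hrep : (fun a => ∫⁻ s in Ioo (c a) 1, ψ a s)
      = fun a => ∫⁻ s, ({q : α × ℝ | c q.1 < q.2 ∧ q.2 < 1}.indicator (Function.uncurry ψ)) (a, s) := by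
    funext a
    rw [← lintegral_indicator measurableSet_Ioo]
    congr 1
  rw [hrep]
  apply Measurable.lintegral_prod_right'
  exact hψ.indicator ((measurableSet_lt (hc.comp measurable_fst) measurable_snd).inter
    (measurableSet_lt measurable_snd measurable_const))

/-- Swapping the order of integration over the region `a < ξ < s < 1`. -/
lemma swap_triangle (a : ℝ) (F : ℝ → ℝ → ℝ≥0∞) (hF : Measurable (Function.uncurry F)) :
    ∫⁻ ξ in Ioo a 1, ∫⁻ s in Ioo ξ 1, F ξ s = ∫⁻ s in Ioo a 1, ∫⁻ ξ in Ioo a s, F ξ s := by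
  set G : ℝ → ℝ → ℝ≥0∞ := fun ξ s =>
    ({q : ℝ × ℝ | a < q.1 ∧ q.1 < q.2 ∧ q.2 < 1}.indicator (Function.uncurry F)) (ξ, s) with hG
  have hGeq : ∀ ξ s : ℝ, G ξ s = if a < ξ ∧ ξ < s ∧ s < 1 then F ξ s else 0 := by
    intro ξ s
    rw [hG]
    simp only [Set.indicator_apply, Set.mem_setOf_eq]
    rfl
  have hGmeas : AEMeasurable (Function.uncurry G) (volume.prod volume) := by
    apply Measurable.aemeasurable
    exact hF.indicator ((measurableSet_lt measurable_const measurable_fst).inter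
      ((measurableSet_lt measurable_fst measurable_snd).inter
        (measurableSet_lt measurable_snd measurable_const)))
  have hL : ∫⁻ ξ in Ioo a 1, ∫⁻ s in Ioo ξ 1, F ξ s = ∫⁻ ξ, ∫⁻ s, G ξ s := by
    rw [← lintegral_indicator measurableSet_Ioo]
    congr 1
    funext ξ
    by_cases hξ : ξ ∈ Ioo a 1
    · rw [indicator_of_mem hξ, ← lintegral_indicator measurableSet_Ioo]
      congr 1
      funext s
      by_cases hs : s ∈ Ioo ξ 1
      · rw [indicator_of_mem hs, hGeq, if_pos ⟨hξ.1, hs.1, hs.2⟩]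
      · rw [indicator_of_notMem hs, hGeq, if_neg]
        intro hmem
        exact hs ⟨hmem.2.1, hmem.2.2⟩
    · rw [indicator_of_notMem hξ]
      have hz : ∀ s : ℝ, G ξ s = 0 := by
        intro s
        rw [hGeq, if_neg]
        intro hmem
        exact hξ ⟨hmem.1, lt_trans hmem.2.1 hmem.2.2⟩
      simp only [hz, lintegral_const, zero_mul]
  have hR : ∫⁻ s in Ioo a 1, ∫⁻ ξ in Ioo a s, F ξ s = ∫⁻ s, ∫⁻ ξ, G ξ s := by
    rw [← lintegral_indicator measurableSet_Ioo]
    congr 1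
    funext s
    by_cases hs : s ∈ Ioo a 1
    · rw [indicator_of_mem hs, ← lintegral_indicator measurableSet_Ioo]
      congr 1
      funext ξ
      by_cases hξ : ξ ∈ Ioo a s
      · rw [indicator_of_mem hξ, hGeq, if_pos ⟨hξ.1, hξ.2, hs.2⟩]
      · rw [indicator_of_notMem hξ, hGeq, if_neg]
        intro hmem
        exact hξ ⟨hmem.1, hmem.2.1⟩
    · rw [indicator_of_notMem hs]
      have hz : ∀ ξ : ℝ, G ξ s = 0 := by
        intro ξ
        rw [hGeq, if_neg]
        intro hmem
        exact hs ⟨lt_trans hmem.1 hmem.2.1, hmem.2.2⟩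
      simp only [hz, lintegral_const, zero_mul]
  rw [hL, hR]
  exact lintegral_lintegral_swap hGmeas


lemma lintegral_inv_sqrt (ξ : ℝ) (hξ : ξ < 1) :
    ∫⁻ s in Ioo ξ 1, ENNReal.ofReal ((1 - s) ^ (-(1:ℝ)/2)) =
      ENNReal.ofReal (2 * (1 - ξ) ^ ((1:ℝ)/2)) := by
  have hemb : MeasurableEmbedding (fun s : ℝ => 1 - s) :=
    (Homeomorph.subLeft (1:ℝ)).measurableEmbedding
  have hmp : MeasurePreserving (fun s : ℝ => 1 - s) volume volume :=
    Measure.measurePreserving_sub_left volume 1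
  have hpre : (fun s : ℝ => 1 - s) ⁻¹' (Ioo 0 (1 - ξ)) = Ioo ξ 1 := by
    ext s
    simp only [mem_preimage, mem_Ioo]
    constructor
    · rintro ⟨h1, h2⟩; constructor <;> linarith
    · rintro ⟨h1, h2⟩; constructor <;> linarith
  have hsub := hmp.setLIntegral_comp_preimage_emb hemb
    (fun t => ENNReal.ofReal (t ^ (-(1:ℝ)/2))) (Ioo 0 (1 - ξ))
  rw [hpre] at hsub
  rw [hsub]
  have hc : (0:ℝ) < 1 - ξ := by linarith
  have hint : IntegrableOn (fun t : ℝ => t ^ (-(1:ℝ)/2)) (Ioo 0 (1 - ξ)) :=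
    (intervalIntegral.integrableOn_Ioo_rpow_iff hc).2 (by norm_num)
  rw [← ofReal_integral_eq_lintegral_ofReal hint
    ((ae_restrict_iff' measurableSet_Ioo).2 (Filter.Eventually.of_forall
      (fun t ht => Real.rpow_nonneg ht.1.le _)))]
  congr 1
  have h1 : ∫ t in Ioo (0:ℝ) (1-ξ), t ^ (-(1:ℝ)/2) = ∫ t in (0:ℝ)..(1-ξ), t ^ (-(1:ℝ)/2) := by
    rw [intervalIntegral.integral_of_le hc.le, MeasureTheory.integral_Ioc_eq_integral_Ioo]
  rw [h1, integral_rpow (Or.inl (by norm_num))]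
  rw [Real.zero_rpow (by norm_num)]
  norm_num
  ring

lemma lintegral_threehalf {a s : ℝ} (has : a ≤ s) (hs : s < 1) :
    ∫⁻ ξ in Ioo a s, ENNReal.ofReal ((1 - ξ) ^ (-(3:ℝ)/2)) ≤
      ENNReal.ofReal (2 * (1 - s) ^ (-(1:ℝ)/2)) := by
  have hcont : ContinuousOn (fun ξ : ℝ => (1 - ξ) ^ (-(3:ℝ)/2)) (Icc a s) := by
    apply ContinuousOn.rpow_const
    · exact (continuous_const.sub continuous_id).continuousOn
    · intro x hx
      left
      have : x ≤ s := hx.2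
      intro h0
      nlinarith [h0]
  have hint : IntegrableOn (fun ξ : ℝ => (1 - ξ) ^ (-(3:ℝ)/2)) (Ioo a s) :=
    (hcont.integrableOn_compact isCompact_Icc).mono_set Ioo_subset_Icc_self
  rw [← ofReal_integral_eq_lintegral_ofReal hint
    ((ae_restrict_iff' measurableSet_Ioo).2 (Filter.Eventually.of_forall
      (fun t ht => Real.rpow_nonneg (by linarith [ht.2] : (0:ℝ) ≤ 1 - t) _)))]
  apply ENNReal.ofReal_le_ofReal
  have hkey : ∫ ξ in a..s, (1 - ξ) ^ (-(3:ℝ)/2)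
      = 2 * (1 - s) ^ (-(1:ℝ)/2) - 2 * (1 - a) ^ (-(1:ℝ)/2) := by
    have hderiv : ∀ x ∈ uIcc a s,
        HasDerivAt (fun ξ : ℝ => 2 * (1 - ξ) ^ (-(1:ℝ)/2)) ((1 - x) ^ (-(3:ℝ)/2)) x := by
      intro x hx
      rw [uIcc_of_le has] at hx
      have hx1 : 1 - x ≠ 0 := by
        have : x ≤ s := hx.2
        intro h0; nlinarith [h0]
      have h1 : HasDerivAt (fun ξ : ℝ => 1 - ξ) (-1) x := by
        simpa using (hasDerivAt_id' x).const_sub (1:ℝ)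
      have h2 : HasDerivAt (fun y : ℝ => y ^ (-(1:ℝ)/2))
          ((-(1:ℝ)/2) * (1 - x) ^ ((-(1:ℝ)/2) - 1)) (1 - x) :=
        Real.hasDerivAt_rpow_const (Or.inl hx1)
      have h3 := (h2.comp x h1).const_mul (2:ℝ)
      refine h3.congr_deriv ?_
      have : (-(1:ℝ)/2) - 1 = -(3:ℝ)/2 := by norm_num
      rw [this]
      ring
    have hii : IntervalIntegrable (fun ξ : ℝ => (1 - ξ) ^ (-(3:ℝ)/2)) volume a s := by
      rw [intervalIntegrable_iff_integrableOn_Ioc_of_le has]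
      exact (hcont.integrableOn_compact isCompact_Icc).mono_set Ioc_subset_Icc_self
    rw [intervalIntegral.integral_eq_sub_of_hasDerivAt hderiv hii]
  have h2 : ∫ ξ in Ioo a s, (1 - ξ) ^ (-(3:ℝ)/2) = ∫ ξ in a..s, (1 - ξ) ^ (-(3:ℝ)/2) := by
    rw [intervalIntegral.integral_of_le has, MeasureTheory.integral_Ioc_eq_integral_Ioo]
  rw [h2, hkey]
  have : 0 ≤ 2 * (1 - a) ^ (-(1:ℝ)/2) :=
    mul_nonneg (by norm_num) (Real.rpow_nonneg (by linarith) _)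
  linarith

/-- Hardy's inequality on `(a,1)` with weight `(1-ξ)⁻²`, in `ℝ≥0∞` form. -/
lemma hardy (a : ℝ) (φ : ℝ → ℝ≥0∞) (hφ : Measurable φ) :
    ∫⁻ ξ in Ioo a 1, ((ENNReal.ofReal (1 - ξ))⁻¹) ^ 2 * (∫⁻ s in Ioo ξ 1, φ s) ^ 2
      ≤ 4 * ∫⁻ s in Ioo a 1, φ s ^ 2 := by
  set ψ : ℝ → ℝ≥0∞ := fun s => φ s ^ 2 * ENNReal.ofReal ((1 - s) ^ ((1:ℝ)/2)) with hψdef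
  have hmeas1 : Measurable fun s : ℝ => (1:ℝ) - s := measurable_const.sub measurable_id
  have hψ : Measurable ψ := by
    apply (hφ.pow_const 2).mul
    apply Measurable.ennreal_ofReal
    fun_prop
  -- Step 1: Cauchy-Schwarz
  have CS : ∀ ξ ∈ Ioo a 1, (∫⁻ s in Ioo ξ 1, φ s) ^ 2
      ≤ (∫⁻ s in Ioo ξ 1, ψ s) * ENNReal.ofReal (2 * (1 - ξ) ^ ((1:ℝ)/2)) := by
    intro ξ hξ
    set f : ℝ → ℝ≥0∞ := fun s => φ s * ENNReal.ofReal ((1 - s) ^ ((1:ℝ)/4)) with hfdef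
    set g : ℝ → ℝ≥0∞ := fun s => ENNReal.ofReal ((1 - s) ^ (-(1:ℝ)/4)) with hgdef
    have hf : Measurable f := by
      apply hφ.mul
      apply Measurable.ennreal_ofReal
      fun_prop
    have hg : Measurable g := by
      apply Measurable.ennreal_ofReal
      fun_prop
    have hfg : ∫⁻ s in Ioo ξ 1, φ s = ∫⁻ s in Ioo ξ 1, (f * g) s := by
      apply setLIntegral_congr_fun measurableSet_Ioo
      intro s hs
      have h1 : (0:ℝ) < 1 - s := by linarith [hs.2]
      simp only [Pi.mul_apply, hfdef, hgdef]
      rw [mul_assoc, ← ENNReal.ofReal_mul (Real.rpow_nonneg h1.le _),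
        ← Real.rpow_add h1]
      norm_num
    have hconj : Real.HolderConjugate 2 2 := Real.HolderConjugate.two_two
    have hCS := ENNReal.lintegral_mul_le_Lp_mul_Lq (volume.restrict (Ioo ξ 1)) hconj
      hf.aemeasurable hg.aemeasurable
    -- compute ∫ f^2
    have hA : ∫⁻ s in Ioo ξ 1, f s ^ (2:ℝ) = ∫⁻ s in Ioo ξ 1, ψ s := by
      apply setLIntegral_congr_fun measurableSet_Ioo
      intro s hs
      have h1 : (0:ℝ) < 1 - s := by linarith [hs.2]
      rw [hfdef, hψdef]
      simp only
      rw [ENNReal.mul_rpow_of_nonneg _ _ (by norm_num : (0:ℝ) ≤ 2),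
        ENNReal.ofReal_rpow_of_pos (Real.rpow_pos_of_pos h1 _),
        ← Real.rpow_mul h1.le]
      norm_num
    have hB : ∫⁻ s in Ioo ξ 1, g s ^ (2:ℝ) = ENNReal.ofReal (2 * (1 - ξ) ^ ((1:ℝ)/2)) := by
      rw [← lintegral_inv_sqrt ξ hξ.2]
      apply setLIntegral_congr_fun measurableSet_Ioo
      intro s hs
      have h1 : (0:ℝ) < 1 - s := by linarith [hs.2]
      rw [hgdef]
      simp only
      rw [ENNReal.ofReal_rpow_of_pos (Real.rpow_pos_of_pos h1 _), ← Real.rpow_mul h1.le]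
      norm_num
    rw [hfg]
    calc (∫⁻ s in Ioo ξ 1, (f * g) s) ^ 2
        ≤ ((∫⁻ s in Ioo ξ 1, f s ^ (2:ℝ)) ^ ((1:ℝ)/2)
            * (∫⁻ s in Ioo ξ 1, g s ^ (2:ℝ)) ^ ((1:ℝ)/2)) ^ 2 :=
          pow_le_pow_left' hCS 2
      _ = (∫⁻ s in Ioo ξ 1, f s ^ (2:ℝ)) * (∫⁻ s in Ioo ξ 1, g s ^ (2:ℝ)) := by
          rw [mul_pow, ← ENNReal.rpow_natCast ((∫⁻ s in Ioo ξ 1, f s ^ (2:ℝ)) ^ ((1:ℝ)/2)) 2,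
            ← ENNReal.rpow_natCast ((∫⁻ s in Ioo ξ 1, g s ^ (2:ℝ)) ^ ((1:ℝ)/2)) 2,
            ← ENNReal.rpow_mul, ← ENNReal.rpow_mul]
          norm_num
      _ = (∫⁻ s in Ioo ξ 1, ψ s) * ENNReal.ofReal (2 * (1 - ξ) ^ ((1:ℝ)/2)) := by
          rw [hA, hB]
  -- Step 2: weight combination
  have Wmul : ∀ ξ ∈ Ioo a 1, ((ENNReal.ofReal (1 - ξ))⁻¹) ^ 2
      * ENNReal.ofReal (2 * (1 - ξ) ^ ((1:ℝ)/2))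
      = ENNReal.ofReal (2 * (1 - ξ) ^ (-(3:ℝ)/2)) := by
    intro ξ hξ
    have h1 : (0:ℝ) < 1 - ξ := by linarith [hξ.2]
    rw [← ENNReal.ofReal_inv_of_pos h1, ← ENNReal.ofReal_pow (inv_nonneg.2 h1.le),
      ← ENNReal.ofReal_mul (by positivity)]
    congr 1
    have hinv : ((1 - ξ)⁻¹) ^ 2 = (1 - ξ) ^ (-(2:ℝ)) := by
      rw [← Real.rpow_natCast (1-ξ)⁻¹ 2, ← Real.rpow_neg_one (1-ξ), ← Real.rpow_mul h1.le]
      norm_num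
    rw [hinv, mul_comm (2:ℝ) _, ← mul_assoc, ← Real.rpow_add h1]
    norm_num
    ring
  -- Step 3: assemble
  calc ∫⁻ ξ in Ioo a 1, ((ENNReal.ofReal (1 - ξ))⁻¹) ^ 2 * (∫⁻ s in Ioo ξ 1, φ s) ^ 2
      ≤ ∫⁻ ξ in Ioo a 1, ENNReal.ofReal (2 * (1 - ξ) ^ (-(3:ℝ)/2)) * ∫⁻ s in Ioo ξ 1, ψ s := by
        apply setLIntegral_mono' measurableSet_Ioo
        intro ξ hξ
        calc ((ENNReal.ofReal (1 - ξ))⁻¹) ^ 2 * (∫⁻ s in Ioo ξ 1, φ s) ^ 2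
            ≤ ((ENNReal.ofReal (1 - ξ))⁻¹) ^ 2
                * ((∫⁻ s in Ioo ξ 1, ψ s) * ENNReal.ofReal (2 * (1 - ξ) ^ ((1:ℝ)/2))) :=
              mul_le_mul_right (CS ξ hξ) _
          _ = (((ENNReal.ofReal (1 - ξ))⁻¹) ^ 2 * ENNReal.ofReal (2 * (1 - ξ) ^ ((1:ℝ)/2)))
                * ∫⁻ s in Ioo ξ 1, ψ s := by ring
          _ = ENNReal.ofReal (2 * (1 - ξ) ^ (-(3:ℝ)/2)) * ∫⁻ s in Ioo ξ 1, ψ s := by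
              rw [Wmul ξ hξ]
    _ = ∫⁻ ξ in Ioo a 1, ∫⁻ s in Ioo ξ 1, ENNReal.ofReal (2 * (1 - ξ) ^ (-(3:ℝ)/2)) * ψ s := by
        apply setLIntegral_congr_fun measurableSet_Ioo
        intro ξ hξ
        beta_reduce
        rw [lintegral_const_mul' _ _ ENNReal.ofReal_ne_top]
    _ = ∫⁻ s in Ioo a 1, ∫⁻ ξ in Ioo a s, ENNReal.ofReal (2 * (1 - ξ) ^ (-(3:ℝ)/2)) * ψ s := by
        apply swap_triangle
        apply Measurable.mul
        · apply Measurable.ennreal_ofReal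
          fun_prop
        · exact hψ.comp measurable_snd
    _ ≤ ∫⁻ s in Ioo a 1, 4 * φ s ^ 2 := by
        apply setLIntegral_mono' measurableSet_Ioo
        intro s hs
        have h1 : (0:ℝ) < 1 - s := by linarith [hs.2]
        have hcm : Measurable fun ξ : ℝ => ENNReal.ofReal (2 * (1 - ξ) ^ (-(3:ℝ)/2)) := by
          apply Measurable.ennreal_ofReal
          fun_prop
        rw [lintegral_mul_const _ hcm]
        have hconst : ∀ ξ : ℝ, ENNReal.ofReal (2 * (1 - ξ) ^ (-(3:ℝ)/2))
            = 2 * ENNReal.ofReal ((1 - ξ) ^ (-(3:ℝ)/2)) := by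
          intro ξ
          rw [ENNReal.ofReal_mul (by norm_num : (0:ℝ) ≤ 2)]
          norm_num
        have hprod : ENNReal.ofReal ((1 - s) ^ (-(1:ℝ)/2)) * ENNReal.ofReal ((1 - s) ^ ((1:ℝ)/2))
            = 1 := by
          rw [← ENNReal.ofReal_mul (Real.rpow_nonneg h1.le _), ← Real.rpow_add h1]
          norm_num
        calc (∫⁻ ξ in Ioo a s, ENNReal.ofReal (2 * (1 - ξ) ^ (-(3:ℝ)/2))) * ψ s
            = (2 * ∫⁻ ξ in Ioo a s, ENNReal.ofReal ((1 - ξ) ^ (-(3:ℝ)/2))) * ψ s := by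
              simp only [hconst]
              rw [lintegral_const_mul' _ _ (by norm_num : (2:ℝ≥0∞) ≠ ⊤)]
          _ ≤ (2 * ENNReal.ofReal (2 * (1 - s) ^ (-(1:ℝ)/2))) * ψ s := by
              gcongr
              exact lintegral_threehalf hs.1.le hs.2
          _ = 4 * φ s ^ 2 := by
              rw [hψdef]
              simp only
              rw [ENNReal.ofReal_mul (by norm_num : (0:ℝ) ≤ 2),
                show ENNReal.ofReal (2:ℝ) = 2 from by norm_num]
              calc 2 * (2 * ENNReal.ofReal ((1 - s) ^ (-(1:ℝ)/2)))
                    * (φ s ^ 2 * ENNReal.ofReal ((1 - s) ^ ((1:ℝ)/2)))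
                  = (2 * 2) * φ s ^ 2 * (ENNReal.ofReal ((1 - s) ^ (-(1:ℝ)/2))
                      * ENNReal.ofReal ((1 - s) ^ ((1:ℝ)/2))) := by ring
                _ = 4 * φ s ^ 2 := by rw [hprod]; ring
    _ = 4 * ∫⁻ s in Ioo a 1, φ s ^ 2 := lintegral_const_mul' _ _ (by norm_num)

/-- Near-identity of the Duffy transform at `V̂ = (1,0)` in a weighted sense (case θ = 1):
`∫_{T̂} d_V̂(ξ,η)⁻² (v(η(1-ξ)+ξ, η) - v(ξ,η))² dξ dη ≤ C ∫_{T̂} |∂₁v|²`. -/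
theorem duffy_near_identity_weighted :
    ∃ C : ℝ, 0 < C ∧
      ∀ v : ℝ × ℝ → ℝ, ContDiffOn ℝ 1 v refTriangle →
        (∫⁻ p in refTriangle,
            ENNReal.ofReal (((p.1 - 1) ^ 2 + p.2 ^ 2)⁻¹ *
              (v (p.2 * (1 - p.1) + p.1, p.2) - v p) ^ 2))
          ≤ ENNReal.ofReal C *
            ∫⁻ p in refTriangle,
              ENNReal.ofReal ((fderivWithin ℝ v refTriangle p (1, 0)) ^ 2) := by
  refine ⟨4, by norm_num, fun v hv => ?_⟩
  have hopen := isOpen_refTriangle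
  set D : ℝ × ℝ → ℝ := fun p => fderiv ℝ v p (1, 0) with hDdef
  have hDmeas : Measurable D := measurable_fderiv_apply_const ℝ v (1, 0)
  -- the measurable majorant
  set G : ℝ × ℝ → ℝ≥0∞ := fun p => ((ENNReal.ofReal (1 - p.1))⁻¹) ^ 2
      * (∫⁻ s in Ioo p.1 1, ENNReal.ofReal |D (s, p.2)|) ^ 2 with hGdef
  have hu : Measurable (Function.uncurry fun (p : ℝ × ℝ) (s : ℝ) =>
      ENNReal.ofReal |D (s, p.2)|) := by
    apply Measurable.ennreal_ofReal
    apply Measurable.abs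
    exact hDmeas.comp (measurable_snd.prodMk measurable_fst.snd)
  have htail := measurable_tail (fun p s => ENNReal.ofReal |D (s, p.2)|) Prod.fst hu
    measurable_fst
  have hGmeas : Measurable G :=
    ((((measurable_const.sub measurable_fst).ennreal_ofReal).inv).pow_const 2).mul
      (htail.pow_const 2)
  -- pointwise key bound via FTC
  have key : ∀ p ∈ refTriangle,
      ENNReal.ofReal (((p.1 - 1) ^ 2 + p.2 ^ 2)⁻¹ *
        (v (p.2 * (1 - p.1) + p.1, p.2) - v p) ^ 2) ≤ G p := by
    rintro ⟨ξ, η⟩ ⟨hη0, hηξ, hξ1⟩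
    simp only [hGdef]
    set q : ℝ := η * (1 - ξ) + ξ with hq
    have hξ0 : (0:ℝ) < ξ := lt_trans hη0 hηξ
    have hξq : ξ < q := by nlinarith
    have hq1 : q < 1 := by nlinarith
    have h1ξ : (0:ℝ) < 1 - ξ := by linarith
    have hseg : ∀ s ∈ Icc ξ q, (s, η) ∈ refTriangle := by
      intro s hs
      exact ⟨hη0, lt_of_lt_of_le hηξ hs.1, lt_of_le_of_lt hs.2 hq1⟩
    have hderiv : ∀ s ∈ uIcc ξ q, HasDerivAt (fun t => v (t, η)) (D (s, η)) s := by
      intro s hs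
      rw [uIcc_of_le hξq.le] at hs
      have hdiff : DifferentiableAt ℝ v (s, η) :=
        (hv.contDiffAt (hopen.mem_nhds (hseg s hs))).differentiableAt one_ne_zero
      have hline : HasDerivAt (fun t : ℝ => ((t, η) : ℝ × ℝ)) ((1:ℝ), (0:ℝ)) s :=
        (hasDerivAt_id s).prodMk (hasDerivAt_const s η)
      exact hdiff.hasFDerivAt.comp_hasDerivAt s hline
    have hcontD : ContinuousOn (fun s : ℝ => D (s, η)) (Icc ξ q) := by
      have h1 : ContinuousOn (fderiv ℝ v) refTriangle :=
        hv.continuousOn_fderiv_of_isOpen hopen le_rfl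
      have h2 : ContinuousOn (fun s : ℝ => fderiv ℝ v (s, η)) (Icc ξ q) :=
        h1.comp (Continuous.continuousOn (by fun_prop)) hseg
      exact (ContinuousLinearMap.apply ℝ ℝ (((1:ℝ), (0:ℝ)) : ℝ × ℝ)).continuous.comp_continuousOn h2
    have hii : IntervalIntegrable (fun s : ℝ => D (s, η)) volume ξ q := by
      rw [intervalIntegrable_iff_integrableOn_Ioc_of_le hξq.le]
      exact (hcontD.integrableOn_compact isCompact_Icc).mono_set Ioc_subset_Icc_self
    have hFTC : ∫ s in ξ..q, D (s, η) = v (q, η) - v (ξ, η) :=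
      intervalIntegral.integral_eq_sub_of_hasDerivAt hderiv hii
    have habs : |v (q, η) - v (ξ, η)| ≤ ∫ s in ξ..q, |D (s, η)| := by
      rw [← hFTC]
      exact intervalIntegral.abs_integral_le_integral_abs hξq.le
    have hw : ((ξ - 1) ^ 2 + η ^ 2)⁻¹ ≤ ((1 - ξ) ^ 2)⁻¹ := by
      apply inv_anti₀ (by positivity)
      nlinarith
    have hstep : ENNReal.ofReal |v (q, η) - v (ξ, η)|
        ≤ ∫⁻ s in Ioo ξ 1, ENNReal.ofReal |D (s, η)| := by
      calc ENNReal.ofReal |v (q, η) - v (ξ, η)|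
          ≤ ENNReal.ofReal (∫ s in ξ..q, |D (s, η)|) := ENNReal.ofReal_le_ofReal habs
        _ = ∫⁻ s in Ioc ξ q, ENNReal.ofReal |D (s, η)| := by
            rw [intervalIntegral.integral_of_le hξq.le,
              ofReal_integral_eq_lintegral_ofReal hii.1.abs
                (ae_of_all _ fun s => abs_nonneg _)]
        _ ≤ ∫⁻ s in Ioo ξ 1, ENNReal.ofReal |D (s, η)| := by
            apply lintegral_mono_set
            intro s hs
            exact ⟨hs.1, lt_of_le_of_lt hs.2 hq1⟩
    calc ENNReal.ofReal (((ξ - 1) ^ 2 + η ^ 2)⁻¹ * (v (η * (1 - ξ) + ξ, η) - v (ξ, η)) ^ 2)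
        ≤ ENNReal.ofReal (((1 - ξ) ^ 2)⁻¹ * (v (q, η) - v (ξ, η)) ^ 2) := by
          apply ENNReal.ofReal_le_ofReal
          exact mul_le_mul_of_nonneg_right hw (sq_nonneg _)
      _ = ((ENNReal.ofReal (1 - ξ))⁻¹) ^ 2 * (ENNReal.ofReal |v (q, η) - v (ξ, η)|) ^ 2 := by
          rw [ENNReal.ofReal_mul (by positivity)]
          congr 1
          · rw [← inv_pow, ENNReal.ofReal_pow (inv_nonneg.2 h1ξ.le),
              ENNReal.ofReal_inv_of_pos h1ξ]
          · rw [← sq_abs, ENNReal.ofReal_pow (abs_nonneg _)]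
      _ ≤ ((ENNReal.ofReal (1 - ξ))⁻¹) ^ 2
            * (∫⁻ s in Ioo ξ 1, ENNReal.ofReal |D (s, η)|) ^ 2 := by
          exact mul_le_mul_right (pow_le_pow_left' hstep 2) _
  -- assemble
  have hRHS : (∫⁻ p in refTriangle,
      ENNReal.ofReal ((fderivWithin ℝ v refTriangle p (1, 0)) ^ 2))
      = ∫⁻ p in refTriangle, ENNReal.ofReal (D p ^ 2) := by
    apply setLIntegral_congr_fun hopen.measurableSet
    intro p hp
    rw [hDdef]
    simp only
    rw [fderivWithin_of_isOpen hopen hp]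
  rw [hRHS]
  have hDsq : Measurable fun p : ℝ × ℝ => ENNReal.ofReal (D p ^ 2) :=
    ((hDmeas.pow_const 2).ennreal_ofReal)
  calc ∫⁻ p in refTriangle,
        ENNReal.ofReal (((p.1 - 1) ^ 2 + p.2 ^ 2)⁻¹ *
          (v (p.2 * (1 - p.1) + p.1, p.2) - v p) ^ 2)
      ≤ ∫⁻ p in refTriangle, G p := setLIntegral_mono hGmeas key
    _ = ∫⁻ η in Ioo (0:ℝ) 1, ∫⁻ ξ in Ioo η 1, G (ξ, η) := triangle_lintegral G hGmeas
    _ ≤ ∫⁻ η in Ioo (0:ℝ) 1, 4 * ∫⁻ s in Ioo η 1, (ENNReal.ofReal |D (s, η)|) ^ 2 := by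
        apply lintegral_mono_ae
        apply ae_of_all
        intro η
        exact hardy η (fun s => ENNReal.ofReal |D (s, η)|)
          (((hDmeas.comp (measurable_id.prodMk measurable_const)).abs).ennreal_ofReal)
    _ = ∫⁻ η in Ioo (0:ℝ) 1, 4 * ∫⁻ s in Ioo η 1, ENNReal.ofReal (D (s, η) ^ 2) := by
        apply lintegral_congr
        intro η
        congr 1
        apply lintegral_congr
        intro s
        rw [← ENNReal.ofReal_pow (abs_nonneg _), sq_abs]
    _ = 4 * ∫⁻ η in Ioo (0:ℝ) 1, ∫⁻ s in Ioo η 1, ENNReal.ofReal (D (s, η) ^ 2) :=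
        lintegral_const_mul' _ _ (by norm_num)
    _ = 4 * ∫⁻ p in refTriangle, ENNReal.ofReal (D p ^ 2) := by
        rw [← triangle_lintegral _ hDsq]
    _ = ENNReal.ofReal 4 * ∫⁻ p in refTriangle, ENNReal.ofReal (D p ^ 2) := by
        norm_num
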